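/- Let d ∈ ℕ, d ≥ 1, let p ∈ ℕ, p ≥ 1, let K ⊆ ℝ^{d+1} be open with (x_K,t_K) ∈ K, and let V ∈ C^{max(p−2,0)}(K;ℝ). Suppose ψ ∈ C^p(K;ℂ) satisfies Sψ = 0 everywhere on K, where Sφ := i∂_tφ + ½Δ_xφ − Vφ. Then the Taylor polynomial q := T^{p+1}_{(x_K,t_K)}ψ of order p+1 centered at (x_K,t_K) satisfies D^j(Sq)(x_K,t_K) = 0 for every multi-index j with |j| ≤ p−2; that is, T^{p+1}_{(x_K,t_K)}ψ belongs to the quasi-Trefftz space QT^p(K). -/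

import Mathlib

open scoped BigOperators
open MeasureTheory

noncomputable section

/-- Space–time points `(x, t)` with `x ∈ ℝ^d`, `t ∈ ℝ`. -/
abbrev Pt (d : ℕ) : Type := (Fin d → ℝ) × ℝ

/-- Multi-indices `j = (j_x, j_t)`. -/
abbrev MI (d : ℕ) : Type := (Fin d → ℕ) × ℕ

/-- `|j|`, the total order of a multi-index. -/
def MI.deg {d : ℕ} (j : MI d) : ℕ := (∑ ℓ, j.1 ℓ) + j.2

/-- `j!`. -/
def MI.fact {d : ℕ} (j : MI d) : ℕ := (∏ ℓ, Nat.factorial (j.1 ℓ)) * Nat.factorial j.2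

/-- componentwise difference of multi-indices. -/
def MI.sub {d : ℕ} (j z : MI d) : MI d := (fun ℓ => j.1 ℓ - z.1 ℓ, j.2 - z.2)

/-- add `k` to the spatial component `ℓ` of a multi-index. -/
def MI.addX {d : ℕ} (j : MI d) (ℓ : Fin d) (k : ℕ) : MI d :=
  (fun m => j.1 m + if m = ℓ then k else 0, j.2)

/-- spatial canonical basis vector in `ℝ^d`. -/
def eVecd (d : ℕ) (ℓ : Fin d) : Fin d → ℝ := fun m => if m = ℓ then 1 else 0

/-- spatial unit direction in space–time. -/
def eDir (d : ℕ) (ℓ : Fin d) : Pt d := (eVecd d ℓ, 0)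

/-- time unit direction in space–time. -/
def tDir (d : ℕ) : Pt d := (0, 1)

/-- directional (partial) derivative. -/
def pd {d : ℕ} (v : Pt d) (f : Pt d → ℂ) : Pt d → ℂ := fun z => fderiv ℝ f z v

/-- the multi-index partial derivative `D^j = ∂_{x_1}^{j_1} ⋯ ∂_{x_d}^{j_d} ∂_t^{j_t}`. -/
def Dmi {d : ℕ} (j : MI d) (f : Pt d → ℂ) : Pt d → ℂ :=
  (List.finRange d).foldr (fun ℓ g => (pd (eDir d ℓ))^[j.1 ℓ] g) ((pd (tDir d))^[j.2] f)

/-- the Schrödinger operator `S f = i ∂_t f + ½ Δ_x f − V f`. -/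
def Sop {d : ℕ} (V : Pt d → ℝ) (f : Pt d → ℂ) : Pt d → ℂ := fun z =>
  Complex.I * pd (tDir d) f z
    + (1 / 2) * ∑ ℓ : Fin d, pd (eDir d ℓ) (pd (eDir d ℓ) f) z
    - (V z : ℂ) * f z

/-- all multi-indices with every component `≤ p`. -/
def MIall (d p : ℕ) : Finset (MI d) :=
  (Finset.univ : Finset ((Fin d → Fin (p + 1)) × Fin (p + 1))).image
    (fun j => ((fun ℓ => (j.1 ℓ : ℕ)), (j.2 : ℕ)))

/-- multi-indices with `|j| ≤ p`. -/
def MIle (d p : ℕ) : Finset (MI d) := (MIall d p).filter (fun j => MI.deg j ≤ p)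

/-- multi-indices with `|j| < m`. -/
def MIlt (d m : ℕ) : Finset (MI d) := (MIall d m).filter (fun j => MI.deg j < m)

/-- multi-indices with `|j| = m`. -/
def MIeq (d m : ℕ) : Finset (MI d) := (MIall d m).filter (fun j => MI.deg j = m)

/-- multi-indices `z ≤ j` (componentwise). -/
def MIbelow {d : ℕ} (j : MI d) : Finset (MI d) :=
  (MIall d (MI.deg j)).filter (fun z => (∀ ℓ, z.1 ℓ ≤ j.1 ℓ) ∧ z.2 ≤ j.2)

/-- monomial of multi-index `j`, centered at `c`, scaled by `h`. -/
def monoC {d : ℕ} (c : Pt d) (h : ℝ) (j : MI d) : Pt d → ℂ := fun z =>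
  (∏ ℓ, (((z.1 ℓ - c.1 ℓ) / h : ℝ) : ℂ) ^ j.1 ℓ) * (((z.2 - c.2) / h : ℝ) : ℂ) ^ j.2

/-- `ℙ^p`: polynomial functions `ℝ^{d+1} → ℂ` of total degree `≤ p`. -/
def PolySet (d p : ℕ) : Set (Pt d → ℂ) :=
  {q | ∃ C : MI d → ℂ, ∀ z, q z = ∑ j ∈ MIle d p, C j * monoC ((0 : Fin d → ℝ), (0 : ℝ)) 1 j z}

/-- the quasi-Trefftz space `QT^p(K)` for the potential `V`, centered at `c`:
polynomials of degree `≤ p` with `D^j(Sq)(c) = 0` for all `|j| ≤ p − 2`. -/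
def QTset (d p : ℕ) (V : Pt d → ℝ) (c : Pt d) : Set (Pt d → ℂ) :=
  {q | q ∈ PolySet d p ∧ ∀ j : MI d, MI.deg j + 2 ≤ p → Dmi j (Sop V q) c = 0}

/-- Taylor polynomial of order `m` (degree `m − 1`) centered at `c`. -/
def TaylorP {d : ℕ} (m : ℕ) (c : Pt d) (φ : Pt d → ℂ) : Pt d → ℂ := fun z =>
  ∑ j ∈ MIlt d m, ((MI.fact j : ℂ))⁻¹ * Dmi j φ c * monoC c 1 j z

/-- Euclidean distance on `ℝ^{d+1} = ℝ^d × ℝ`. -/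
def eDist {d : ℕ} (z w : Pt d) : ℝ :=
  Real.sqrt ((∑ ℓ, (z.1 ℓ - w.1 ℓ) ^ 2) + (z.2 - w.2) ^ 2)

namespace QT
attribute [local instance 2000] instBEqOfDecidableEq
open scoped ContDiff
variable {d : ℕ}

variable {d : ℕ}

/-- iterated directional derivative along a list (head applied first / innermost). -/
def Dlist : List (Pt d) → (Pt d → ℂ) → (Pt d → ℂ)
  | [], f => f
  | v :: vs, f => Dlist vs (pd v f)

@[simp] lemma Dlist_nil (f : Pt d → ℂ) : Dlist [] f = f := rfl
@[simp] lemma Dlist_cons (v : Pt d) (vs : List (Pt d)) (f : Pt d → ℂ) :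
    Dlist (v :: vs) f = Dlist vs (pd v f) := rfl

lemma Dlist_append (vs ws : List (Pt d)) (f : Pt d → ℂ) :
    Dlist ws (Dlist vs f) = Dlist (vs ++ ws) f := by
  induction vs generalizing f with
  | nil => rfl
  | cons v vs ih => simp [ih]

lemma pd_congr_on {U : Set (Pt d)} (hU : IsOpen U) {f g : Pt d → ℂ}
    (h : ∀ z ∈ U, f z = g z) (v : Pt d) : ∀ z ∈ U, pd v f z = pd v g z := by
  intro z hz
  have : f =ᶠ[nhds z] g := Filter.eventuallyEq_of_mem (hU.mem_nhds hz) h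
  simp [pd, this.fderiv_eq]

lemma Dlist_congr_on {U : Set (Pt d)} (hU : IsOpen U) {f g : Pt d → ℂ}
    (h : ∀ z ∈ U, f z = g z) (vs : List (Pt d)) : ∀ z ∈ U, Dlist vs f z = Dlist vs g z := by
  induction vs generalizing f g with
  | nil => exact h
  | cons v vs ih => exact fun z hz => ih (pd_congr_on hU h v) z hz

lemma pd_contDiffOn {U : Set (Pt d)} (hU : IsOpen U) {n : ℕ} {f : Pt d → ℂ}
    (hf : ContDiffOn ℝ (n + 1 : ℕ) f U) (v : Pt d) : ContDiffOn ℝ (n : ℕ) (pd v f) U := by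
  have h1 : ContDiffOn ℝ (n : ℕ) (fderiv ℝ f) U := by
    apply hf.fderiv_of_isOpen hU
    exact_mod_cast le_rfl
  exact h1.clm_apply contDiffOn_const

lemma diffAt_of_contDiffOn {U : Set (Pt d)} (hU : IsOpen U) {n : ℕ} {f : Pt d → ℂ}
    (hf : ContDiffOn ℝ (n + 1 : ℕ) f U) {z : Pt d} (hz : z ∈ U) : DifferentiableAt ℝ f z := by
  have := hf.contDiffAt (hU.mem_nhds hz)
  exact this.differentiableAt (by simp)

lemma pd_add_on {U : Set (Pt d)} (hU : IsOpen U) {n : ℕ} {f g : Pt d → ℂ}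
    (hf : ContDiffOn ℝ (n + 1 : ℕ) f U) (hg : ContDiffOn ℝ (n + 1 : ℕ) g U) (v : Pt d) :
    ∀ z ∈ U, pd v (fun z => f z + g z) z = pd v f z + pd v g z := by
  intro z hz
  simp only [pd]
  rw [fderiv_fun_add (diffAt_of_contDiffOn hU hf hz) (diffAt_of_contDiffOn hU hg hz)]
  rfl

lemma Dlist_add_on {U : Set (Pt d)} (hU : IsOpen U) {f g : Pt d → ℂ} (vs : List (Pt d))
    (hf : ContDiffOn ℝ (vs.length : ℕ) f U) (hg : ContDiffOn ℝ (vs.length : ℕ) g U) :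
    ∀ z ∈ U, Dlist vs (fun z => f z + g z) z = Dlist vs f z + Dlist vs g z := by
  induction vs generalizing f g with
  | nil => intro z hz; rfl
  | cons v vs ih =>
    intro z hz
    simp only [Dlist_cons]
    rw [Dlist_congr_on hU (pd_add_on hU hf hg v) vs z hz]
    exact ih (pd_contDiffOn hU hf v) (pd_contDiffOn hU hg v) z hz

-- Schwarz symmetry on an open set
lemma pd_comm_on {U : Set (Pt d)} (hU : IsOpen U) {f : Pt d → ℂ}
    (hf : ContDiffOn ℝ (2 : ℕ) f U) (v w : Pt d) :
    ∀ z ∈ U, pd v (pd w f) z = pd w (pd v f) z := by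
  intro z hz
  have hat : ContDiffAt ℝ (2 : ℕ) f z := hf.contDiffAt (hU.mem_nhds hz)
  have hsymm : IsSymmSndFDerivAt ℝ f z := hat.isSymmSndFDerivAt (by simp)
  have hdf : DifferentiableAt ℝ (fderiv ℝ f) z := by
    have : ContDiffAt ℝ (1 : ℕ) (fderiv ℝ f) z := hat.fderiv_right (by exact_mod_cast le_rfl)
    exact this.differentiableAt (by simp)
  have key : ∀ a b : Pt d, pd a (pd b f) z = fderiv ℝ (fderiv ℝ f) z a b := by
    intro a b
    have : pd b f = fun y => (fderiv ℝ f y) b := rfl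
    rw [this]
    show fderiv ℝ (fun y => (fderiv ℝ f y) b) z a = _
    rw [fderiv_clm_apply hdf (differentiableAt_const b)]
    simp
  rw [key v w, key w v, hsymm w v]

-- permutation invariance
lemma Dlist_perm_on {U : Set (Pt d)} (hU : IsOpen U) {vs ws : List (Pt d)} (hp : vs.Perm ws) :
    ∀ f : Pt d → ℂ, ContDiffOn ℝ (vs.length : ℕ) f U →
      ∀ z ∈ U, Dlist vs f z = Dlist ws f z := by
  induction hp with
  | nil => intro f _ z _; rfl
  | cons x _ ih =>
    intro f hf z hz
    simp only [Dlist_cons]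
    exact ih (pd x f) (pd_contDiffOn hU hf x) z hz
  | swap x y l =>
    intro f hf z hz
    simp only [Dlist_cons]
    have hlen : (2 : ℕ) ≤ (y :: x :: l).length := by simp
    have h2 : ContDiffOn ℝ (2 : ℕ) f U := hf.of_le (by exact_mod_cast hlen)
    exact Dlist_congr_on hU (pd_comm_on hU h2 x y) l z hz
  | trans h1 h2 ih1 ih2 =>
    intro f hf z hz
    rw [ih1 f hf z hz]
    rw [ih2 f (by rwa [← h1.length_eq]) z hz]
def decX (j : MI d) (ℓ : Fin d) : MI d := (Function.update j.1 ℓ (j.1 ℓ - 1), j.2)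
def decT (j : MI d) : MI d := (j.1, j.2 - 1)

/-- coordinate CLMs -/
def Lx (d : ℕ) (m : Fin d) : Pt d →L[ℝ] ℂ :=
  Complex.ofRealCLM.comp ((ContinuousLinearMap.proj m).comp
    (ContinuousLinearMap.fst ℝ (Fin d → ℝ) ℝ))
def Lt (d : ℕ) : Pt d →L[ℝ] ℂ :=
  Complex.ofRealCLM.comp (ContinuousLinearMap.snd ℝ (Fin d → ℝ) ℝ)

@[simp] lemma Lx_apply (m : Fin d) (z : Pt d) : Lx d m z = ((z.1 m : ℝ) : ℂ) := rfl
@[simp] lemma Lt_apply (z : Pt d) : Lt d z = ((z.2 : ℝ) : ℂ) := rfl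

lemma monoC_eq (c : Pt d) (j : MI d) : monoC c 1 j =
    fun z => (∏ m, (((z.1 m - c.1 m : ℝ)) : ℂ) ^ j.1 m) * (((z.2 - c.2 : ℝ)) : ℂ) ^ j.2 := by
  funext z; simp [monoC]

section mono
variable (c : Pt d) (j : MI d)

def uF (m : Fin d) : Pt d → ℂ := fun z => (((z.1 m - c.1 m : ℝ)) : ℂ)
def wF : Pt d → ℂ := fun z => (((z.2 - c.2 : ℝ)) : ℂ)

lemma hasFDerivAt_uF (m : Fin d) (z : Pt d) : HasFDerivAt (uF c m) (Lx d m) z := by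
  have h := ((Lx d m).hasFDerivAt (x := z)).sub_const ((c.1 m : ℝ) : ℂ)
  refine h.congr_of_eventuallyEq (Filter.Eventually.of_forall fun y => ?_)
  simp [uF]

lemma hasFDerivAt_wF (z : Pt d) : HasFDerivAt (wF c) (Lt d) z := by
  have h := ((Lt d).hasFDerivAt (x := z)).sub_const ((c.2 : ℝ) : ℂ)
  refine h.congr_of_eventuallyEq (Filter.Eventually.of_forall fun y => ?_)
  simp [wF]

lemma hasFDerivAt_monoC (z : Pt d) :
    HasFDerivAt (monoC c 1 j)
      ((∏ m, uF c m z ^ j.1 m) • (((j.2 : ℂ) * wF c z ^ (j.2 - 1)) • Lt d)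
        + (wF c z ^ j.2) • (∑ m, (∏ k ∈ Finset.univ.erase m, uF c k z ^ j.1 k) •
            (((j.1 m : ℂ) * uF c m z ^ (j.1 m - 1)) • Lx d m))) z := by
  have hpow : ∀ m : Fin d, HasFDerivAt (fun z => uF c m z ^ j.1 m)
      (((j.1 m : ℂ) * uF c m z ^ (j.1 m - 1)) • Lx d m) z := by
    intro m
    exact (hasDerivAt_pow (j.1 m) (uF c m z)).comp_hasFDerivAt z (hasFDerivAt_uF c m z)
  have hP : HasFDerivAt (fun z => ∏ m, uF c m z ^ j.1 m)
      (∑ m, (∏ k ∈ Finset.univ.erase m, uF c k z ^ j.1 k) •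
        (((j.1 m : ℂ) * uF c m z ^ (j.1 m - 1)) • Lx d m)) z :=
    HasFDerivAt.finset_prod (fun m _ => hpow m)
  have hG : HasFDerivAt (fun z => wF c z ^ j.2)
      (((j.2 : ℂ) * wF c z ^ (j.2 - 1)) • Lt d) z :=
    (hasDerivAt_pow j.2 (wF c z)).comp_hasFDerivAt z (hasFDerivAt_wF c z)
  have := hP.mul hG
  rw [monoC_eq]
  exact this

lemma pd_monoC_eDir (ℓ : Fin d) :
    pd (eDir d ℓ) (monoC c 1 j) = fun z => (j.1 ℓ : ℂ) * monoC c 1 (decX j ℓ) z := by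
  funext z
  have h := hasFDerivAt_monoC c j z
  simp only [pd, h.fderiv]
  have hLx : ∀ m : Fin d, Lx d m (eDir d ℓ) = if m = ℓ then 1 else 0 := by
    intro m; simp [eDir, eVecd]; split <;> simp
  have hLt : Lt d (eDir d ℓ) = 0 := by simp [eDir]
  simp only [ContinuousLinearMap.add_apply, ContinuousLinearMap.smul_apply,
    ContinuousLinearMap.sum_apply, hLt, hLx, smul_eq_mul, mul_ite, mul_one, mul_zero,
    Finset.sum_ite_eq', Finset.mem_univ, if_true]
  rw [monoC_eq]
  simp only [decX]
  have hprod : (∏ m, uF c m z ^ (Function.update j.1 ℓ (j.1 ℓ - 1)) m)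
      = uF c ℓ z ^ (j.1 ℓ - 1) * ∏ k ∈ Finset.univ.erase ℓ, uF c k z ^ j.1 k := by
    rw [← Finset.mul_prod_erase Finset.univ _ (Finset.mem_univ ℓ)]
    simp only [Function.update_self]
    congr 1
    apply Finset.prod_congr rfl
    intro k hk
    rw [Function.update_of_ne (Finset.mem_erase.mp hk).1]
  show 0 + wF c z ^ j.2 *
      ((∏ m ∈ Finset.univ.erase ℓ, uF c m z ^ j.1 m) * ((j.1 ℓ : ℂ) * uF c ℓ z ^ (j.1 ℓ - 1)))
    = (j.1 ℓ : ℂ) * ((∏ m, uF c m z ^ (Function.update j.1 ℓ (j.1 ℓ - 1)) m) * wF c z ^ j.2)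
  rw [hprod]; ring

lemma pd_monoC_tDir :
    pd (tDir d) (monoC c 1 j) = fun z => (j.2 : ℂ) * monoC c 1 (decT j) z := by
  funext z
  have h := hasFDerivAt_monoC c j z
  simp only [pd, h.fderiv]
  have hLx : ∀ m : Fin d, Lx d m (tDir d) = 0 := by intro m; simp [tDir]
  have hLt : Lt d (tDir d) = 1 := by simp [tDir]
  simp only [ContinuousLinearMap.add_apply, ContinuousLinearMap.smul_apply,
    ContinuousLinearMap.sum_apply, hLt, hLx, smul_eq_mul, mul_one, mul_zero,
    Finset.sum_const_zero]
  rw [monoC_eq]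
  show (∏ m, uF c m z ^ j.1 m) * ((j.2 : ℂ) * wF c z ^ (j.2 - 1)) + 0
    = (j.2 : ℂ) * ((∏ m, uF c m z ^ (decT j).1 m) * wF c z ^ ((decT j).2))
  simp only [decT]
  ring

end mono

lemma contDiff_monoC (c : Pt d) (j : MI d) {n : WithTop ℕ∞} : ContDiff ℝ n (monoC c 1 j) := by
  rw [monoC_eq]
  apply ContDiff.mul
  · apply contDiff_prod
    intro m _
    have : ContDiff ℝ n (uF c m) := by
      have h := ((Lx d m).contDiff (n := n)).sub contDiff_const (g := fun _ => ((c.1 m : ℝ) : ℂ))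
      convert h using 1
      funext y; simp [uF]
    exact this.pow _
  · have : ContDiff ℝ n (wF c) := by
      have h := ((Lt d).contDiff (n := n)).sub contDiff_const (g := fun _ => ((c.2 : ℝ) : ℂ))
      convert h using 1
      funext y; simp [wF]
    exact this.pow _

def dirv : Option (Fin d) → Pt d
  | none => tDir d
  | some ℓ => eDir d ℓ

def cnt (L : List (Option (Fin d))) : MI d := (fun ℓ => L.count (some ℓ), L.count none)

def canonL (j : MI d) : List (Option (Fin d)) :=
  List.replicate j.2 none
    ++ (List.finRange d).reverse.flatMap (fun ℓ => List.replicate (j.1 ℓ) (some ℓ))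

lemma iterate_pd_eq_Dlist (v : Pt d) (n : ℕ) (f : Pt d → ℂ) :
    (pd v)^[n] f = Dlist (List.replicate n v) f := by
  induction n generalizing f with
  | zero => rfl
  | succ n ih =>
    rw [Function.iterate_succ_apply, List.replicate_succ, Dlist_cons, ih]

lemma Dmi_eq_Dlist (j : MI d) (f : Pt d → ℂ) :
    Dmi j f = Dlist ((canonL j).map dirv) f := by
  have key : ∀ (l : List (Fin d)) (g : Pt d → ℂ),
      l.foldr (fun ℓ g => (pd (eDir d ℓ))^[j.1 ℓ] g) g
        = Dlist ((l.reverse.flatMap (fun ℓ => List.replicate (j.1 ℓ) (some ℓ))).map dirv) g := by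
    intro l
    induction l with
    | nil => intro g; rfl
    | cons a l ih =>
      intro g
      rw [List.foldr_cons, ih, List.reverse_cons, List.flatMap_append, List.map_append,
        ← Dlist_append, iterate_pd_eq_Dlist]
      congr 1
      simp [dirv, List.map_replicate]
  rw [Dmi, key, canonL, List.map_append, ← Dlist_append, iterate_pd_eq_Dlist]
  congr 1
  simp [dirv, List.map_replicate]

lemma count_some_flatMap (j : Fin d → ℕ) (ℓ : Fin d) (l : List (Fin d)) :
    (l.flatMap (fun m => List.replicate (j m) (some m))).count (some ℓ)
      = (l.count ℓ) * j ℓ := by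
  induction l with
  | nil => simp
  | cons a l ih =>
    simp only [List.flatMap_cons, List.count_append, ih, List.count_replicate,
      List.count_cons]
    by_cases h : ℓ = a
    · subst h; simp [add_mul]; ring
    · simp [h, Ne.symm h]

lemma count_none_flatMap (j : Fin d → ℕ) (l : List (Fin d)) :
    (l.flatMap (fun m => List.replicate (j m) (some m))).count none = 0 := by
  induction l with
  | nil => simp
  | cons a l ih => simp [List.flatMap_cons, List.count_append, ih, List.count_replicate]

lemma cnt_canonL (j : MI d) : cnt (canonL j) = j := by
  have hmem : ∀ ℓ : Fin d, ℓ ∈ (List.finRange d).reverse := by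
    intro ℓ; simp [List.mem_finRange]
  have hnodup : ((List.finRange d).reverse).Nodup :=
    List.nodup_reverse.mpr (List.nodup_finRange d)
  ext ℓ
  · show (canonL j).count (some ℓ) = j.1 ℓ
    rw [canonL, List.count_append, List.count_replicate, count_some_flatMap,
      List.count_eq_one_of_mem hnodup (hmem ℓ)]
    simp
  · show (canonL j).count none = j.2
    rw [canonL, List.count_append, List.count_replicate, count_none_flatMap]
    simp

lemma deg_cnt (L : List (Option (Fin d))) : MI.deg (cnt L) = L.length := by
  induction L with
  | nil => simp [cnt, MI.deg]
  | cons a L ih =>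
    cases a with
    | none =>
      have h1 : ∀ ℓ : Fin d, (((none : Option (Fin d)) :: L).count (some ℓ)) = L.count (some ℓ) := by
        intro ℓ; simp [List.count_cons]
      have h2 : (((none : Option (Fin d)) :: L).count none) = L.count none + 1 := by
        simp [List.count_cons]
      simp only [MI.deg, cnt] at *
      simp only [h1, h2, List.length_cons]
      omega
    | some m =>
      have h1 : ∀ ℓ : Fin d, ((some m :: L).count (some ℓ))
          = L.count (some ℓ) + if ℓ = m then 1 else 0 := by
        intro ℓ; by_cases h : ℓ = m <;> simp [List.count_cons, h] <;> exact fun e => h e.symm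
      have h2 : ((some m :: L).count none) = L.count none := by simp [List.count_cons]
      simp only [MI.deg, cnt] at *
      simp only [h1, h2, List.length_cons, Finset.sum_add_distrib, Finset.sum_ite_eq',
        Finset.mem_univ, if_true]
      omega

lemma perm_canonL (L : List (Option (Fin d))) : L.Perm (canonL (cnt L)) := by
  rw [List.perm_iff_count]
  intro a
  cases a with
  | none =>
    have h : (canonL (cnt L)).count none = (cnt (canonL (cnt L))).2 := rfl
    rw [h, cnt_canonL]; rfl
  | some ℓ =>
    have h : (canonL (cnt L)).count (some ℓ) = (cnt (canonL (cnt L))).1 ℓ := rfl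
    rw [h, cnt_canonL]; rfl

lemma length_canonL (j : MI d) : (canonL j).length = MI.deg j := by
  rw [← deg_cnt (canonL j), cnt_canonL]

lemma pd_contDiff_inf {f : Pt d → ℂ} (hf : ContDiff ℝ ∞ f) (v : Pt d) :
    ContDiff ℝ ∞ (pd v f) := by
  have h1 : ContDiff ℝ ∞ (fderiv ℝ f) := hf.fderiv_right (by simp)
  exact h1.clm_apply contDiff_const

lemma pd_const_mul {f : Pt d → ℂ} (hf : Differentiable ℝ f) (a : ℂ) (v : Pt d) :
    pd v (fun z => a * f z) = fun z => a * pd v f z := by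
  funext z
  simp only [pd]
  rw [fderiv_const_mul (hf z) a]
  rfl

lemma Dlist_const_mul {f : Pt d → ℂ} (hf : ContDiff ℝ ∞ f) (a : ℂ) (L : List (Pt d)) :
    Dlist L (fun z => a * f z) = fun z => a * Dlist L f z := by
  induction L generalizing f with
  | nil => rfl
  | cons v L ih =>
    simp only [Dlist_cons]
    rw [pd_const_mul (hf.differentiable (by simp)) a v, ih (pd_contDiff_inf hf v)]

lemma monoC_center (c : Pt d) (j : MI d) :
    monoC c 1 j c = if j = ((fun _ => 0, 0) : MI d) then 1 else 0 := by
  by_cases h : j = ((fun _ => 0, 0) : MI d)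
  · subst h; simp [monoC]
  · simp only [h, if_false]
    have : j.1 ≠ (fun _ => 0) ∨ j.2 ≠ 0 := by
      by_contra hc
      push_neg at hc
      exact h (Prod.ext hc.1 hc.2)
    rcases this with h1 | h2
    · obtain ⟨ℓ, hℓ⟩ : ∃ ℓ, j.1 ℓ ≠ 0 := by
        by_contra hc; push_neg at hc; exact h1 (funext hc)
      simp only [monoC]
      rw [Finset.prod_eq_zero (Finset.mem_univ ℓ)]
      · ring
      · simp [zero_pow hℓ]
    · simp [monoC, zero_pow h2]

lemma cnt_nil : (cnt ([] : List (Option (Fin d)))) = ((fun _ => 0, 0) : MI d) := by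
  simp [cnt]

lemma fact_decX {j : MI d} {ℓ : Fin d} (h : j.1 ℓ ≠ 0) :
    (j.1 ℓ) * MI.fact (decX j ℓ) = MI.fact j := by
  simp only [MI.fact, decX]
  rw [← mul_assoc]
  congr 1
  rw [← Finset.mul_prod_erase Finset.univ _ (Finset.mem_univ ℓ),
    ← Finset.mul_prod_erase Finset.univ (fun m => Nat.factorial (j.1 m)) (Finset.mem_univ ℓ),
    ← mul_assoc]
  congr 1
  · simp only [Function.update_self]
    obtain ⟨k, hk⟩ := Nat.exists_eq_succ_of_ne_zero h
    rw [hk]; simp [Nat.factorial_succ]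
  · apply Finset.prod_congr rfl
    intro m hm
    rw [Function.update_of_ne (Finset.mem_erase.mp hm).1]

lemma fact_decT {j : MI d} (h : j.2 ≠ 0) : (j.2) * MI.fact (decT j) = MI.fact j := by
  simp only [MI.fact, decT]
  obtain ⟨k, hk⟩ := Nat.exists_eq_succ_of_ne_zero h
  rw [hk]
  simp [Nat.factorial_succ]
  ring

lemma cnt_cons_some (ℓ : Fin d) (L : List (Option (Fin d))) :
    cnt (some ℓ :: L) = ((fun m => (cnt L).1 m + if m = ℓ then 1 else 0), (cnt L).2) := by
  apply Prod.ext
  · funext m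
    show (some ℓ :: L).count (some m) = _
    by_cases h : m = ℓ <;> simp [List.count_cons, h, cnt] <;> exact fun e => h e.symm
  · show (some ℓ :: L).count none = _
    simp [List.count_cons, cnt]

lemma cnt_cons_none (L : List (Option (Fin d))) :
    cnt (none :: L) = ((cnt L).1, (cnt L).2 + 1) := by
  apply Prod.ext
  · funext m
    show (none :: L).count (some m) = _
    simp [List.count_cons, cnt]
  · show (none :: L).count none = _
    simp [List.count_cons, cnt]

/-- Key evaluation: iterated derivatives of monomials at the center. -/
lemma Dlist_monoC_center (c : Pt d) (L : List (Option (Fin d))) (j : MI d) :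
    Dlist (L.map dirv) (monoC c 1 j) c
      = if cnt L = j then (MI.fact j : ℂ) else 0 := by
  induction L generalizing j with
  | nil =>
    simp only [List.map_nil, Dlist_nil, monoC_center, cnt_nil]
    by_cases h : ((fun _ => 0, 0) : MI d) = j
    · rw [if_pos h, if_pos h.symm, ← h]
      simp [MI.fact]
    · rw [if_neg h, if_neg (fun e => h e.symm)]
  | cons a L ih =>
    cases a with
    | some ℓ =>
      simp only [List.map_cons, Dlist_cons]
      show Dlist (L.map dirv) (pd (eDir d ℓ) (monoC c 1 j)) c = _
      rw [pd_monoC_eDir, Dlist_const_mul (contDiff_monoC c _)]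
      show (j.1 ℓ : ℂ) * Dlist (L.map dirv) (monoC c 1 (decX j ℓ)) c = _
      rw [ih, cnt_cons_some]
      by_cases h0 : j.1 ℓ = 0
      · have hne : ¬ (((fun m => (cnt L).1 m + if m = ℓ then 1 else 0), (cnt L).2) : MI d) = j := by
          intro e
          have := congrArg (fun q : MI d => q.1 ℓ) e
          simp [h0] at this
        simp [h0, hne]
      · by_cases h : cnt L = decX j ℓ
        · have heq : (((fun m => (cnt L).1 m + if m = ℓ then 1 else 0), (cnt L).2) : MI d) = j := by
            rw [h]
            apply Prod.ext
            · funext m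
              simp only [decX]
              by_cases hm : m = ℓ
              · subst hm; simp [Function.update_self]; omega
              · simp [Function.update_of_ne hm, hm]
            · simp [decX]
          rw [if_pos h, if_pos heq]
          rw [← fact_decX h0]
          push_cast
          ring
        · have hne : ¬ (((fun m => (cnt L).1 m + if m = ℓ then 1 else 0), (cnt L).2) : MI d) = j := by
            intro e
            apply h
            apply Prod.ext
            · funext m
              have e1 := congrArg (fun q : MI d => q.1 m) e
              simp only at e1
              simp only [decX]
              by_cases hm : m = ℓ
              · subst hm; simp only [Function.update_self]; simp at e1 ⊢; omega
              · simp only [Function.update_of_ne hm]; simpa [hm] using e1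
            · have e2 := congrArg (fun q : MI d => q.2) e
              simpa [decX] using e2
          simp [h, hne]
    | none =>
      simp only [List.map_cons, Dlist_cons]
      show Dlist (L.map dirv) (pd (tDir d) (monoC c 1 j)) c = _
      rw [pd_monoC_tDir, Dlist_const_mul (contDiff_monoC c _)]
      show (j.2 : ℂ) * Dlist (L.map dirv) (monoC c 1 (decT j)) c = _
      rw [ih, cnt_cons_none]
      by_cases h0 : j.2 = 0
      · have hne : ¬ ((((cnt L).1, (cnt L).2 + 1)) : MI d) = j := by
          intro e
          have := congrArg (fun q : MI d => q.2) e
          simp [h0] at this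
        simp [h0, hne]
      · by_cases h : cnt L = decT j
        · have heq : ((((cnt L).1, (cnt L).2 + 1)) : MI d) = j := by
            rw [h]
            apply Prod.ext
            · simp [decT]
            · simp only [decT]; omega
          rw [if_pos h, if_pos heq]
          rw [← fact_decT h0]
          push_cast
          ring
        · have hne : ¬ ((((cnt L).1, (cnt L).2 + 1)) : MI d) = j := by
            intro e
            apply h
            apply Prod.ext
            · have e1 := congrArg (fun q : MI d => q.1) e
              simpa [decT] using e1
            · have e2 := congrArg (fun q : MI d => q.2) e
              simp only at e2
              simp only [decT]
              omega
          simp [h, hne]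
-- MI membership lemmas
lemma comp_le_degX (j : MI d) (ℓ : Fin d) : j.1 ℓ ≤ MI.deg j := by
  have : j.1 ℓ ≤ ∑ m, j.1 m :=
    Finset.single_le_sum (fun m _ => Nat.zero_le (j.1 m)) (Finset.mem_univ ℓ)
  simp only [MI.deg]; omega

lemma comp_le_degT (j : MI d) : j.2 ≤ MI.deg j := by simp only [MI.deg]; omega

lemma mem_MIall {j : MI d} {p : ℕ} : j ∈ MIall d p ↔ (∀ ℓ, j.1 ℓ ≤ p) ∧ j.2 ≤ p := by
  constructor
  · rintro h
    simp only [MIall, Finset.mem_image, Finset.mem_univ, true_and] at h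
    obtain ⟨a, ha⟩ := h
    constructor
    · intro ℓ
      have := congrArg (fun q : MI d => q.1 ℓ) ha
      simp only at this
      rw [← this]
      exact Nat.lt_succ_iff.mp (a.1 ℓ).isLt
    · have := congrArg (fun q : MI d => q.2) ha
      simp only at this
      rw [← this]
      exact Nat.lt_succ_iff.mp a.2.isLt
  · rintro ⟨h1, h2⟩
    simp only [MIall, Finset.mem_image, Finset.mem_univ, true_and]
    refine ⟨⟨fun ℓ => ⟨j.1 ℓ, Nat.lt_succ_iff.mpr (h1 ℓ)⟩, ⟨j.2, Nat.lt_succ_iff.mpr h2⟩⟩, ?_⟩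
    apply Prod.ext <;> simp

lemma mem_MIlt {j : MI d} {m : ℕ} : j ∈ MIlt d m ↔ MI.deg j < m := by
  simp only [MIlt, Finset.mem_filter, and_iff_right_iff_imp]
  intro h
  rw [mem_MIall]
  exact ⟨fun ℓ => le_of_lt (lt_of_le_of_lt (comp_le_degX j ℓ) h),
    le_of_lt (lt_of_le_of_lt (comp_le_degT j) h)⟩

lemma mem_MIle {j : MI d} {p : ℕ} : j ∈ MIle d p ↔ MI.deg j ≤ p := by
  simp only [MIle, Finset.mem_filter, and_iff_right_iff_imp]
  intro h
  rw [mem_MIall]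
  exact ⟨fun ℓ => le_trans (comp_le_degX j ℓ) h, le_trans (comp_le_degT j) h⟩

lemma fact_pos (j : MI d) : 0 < MI.fact j := by
  apply Nat.mul_pos
  · exact Finset.prod_pos (fun m _ => Nat.factorial_pos _)
  · exact Nat.factorial_pos _

-- sums
lemma pd_sum {ι : Type*} (s : Finset ι) (F : ι → Pt d → ℂ)
    (hF : ∀ i ∈ s, Differentiable ℝ (F i)) (v : Pt d) :
    pd v (fun z => ∑ i ∈ s, F i z) = fun z => ∑ i ∈ s, pd v (F i) z := by
  funext z
  simp only [pd]
  rw [fderiv_fun_sum (fun i hi => (hF i hi) z)]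
  simp

lemma Dlist_sum {ι : Type*} (s : Finset ι) (F : ι → Pt d → ℂ)
    (hF : ∀ i ∈ s, ContDiff ℝ ∞ (F i)) (L : List (Pt d)) :
    Dlist L (fun z => ∑ i ∈ s, F i z) = fun z => ∑ i ∈ s, Dlist L (F i) z := by
  induction L generalizing F with
  | nil => rfl
  | cons v L ih =>
    simp only [Dlist_cons]
    rw [pd_sum s F (fun i hi => (hF i hi).differentiable (by simp)) v]
    exact ih (fun i => pd v (F i)) (fun i hi => pd_contDiff_inf (hF i hi) v)

lemma contDiff_TaylorP {n : WithTop ℕ∞} (m : ℕ) (c : Pt d) (φ : Pt d → ℂ) :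
    ContDiff ℝ n (TaylorP m c φ) := by
  apply ContDiff.sum
  intro j _
  exact ContDiff.mul contDiff_const (contDiff_monoC c j)

/-- Derivatives of the Taylor polynomial at the center agree with `Dmi` of `φ`. -/
lemma Dlist_TaylorP_center (p : ℕ) (c : Pt d) (φ : Pt d → ℂ)
    (L : List (Option (Fin d))) (hL : MI.deg (cnt L) ≤ p) :
    Dlist (L.map dirv) (TaylorP (p + 1) c φ) c = Dmi (cnt L) φ c := by
  have hmem : cnt L ∈ MIlt d (p + 1) := mem_MIlt.mpr (Nat.lt_succ_iff.mpr hL)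
  have : TaylorP (p + 1) c φ
      = fun z => ∑ j ∈ MIlt d (p+1), ((MI.fact j : ℂ))⁻¹ * Dmi j φ c * monoC c 1 j z := rfl
  rw [this, Dlist_sum _ _ (fun j _ => ContDiff.mul contDiff_const (contDiff_monoC c j))]
  have step : ∀ j ∈ MIlt d (p+1),
      Dlist (L.map dirv) (fun z => ((MI.fact j : ℂ))⁻¹ * Dmi j φ c * monoC c 1 j z) c
        = if cnt L = j then ((MI.fact j : ℂ))⁻¹ * Dmi j φ c * (MI.fact j : ℂ) else 0 := by
    intro j _
    have h1 : (fun z => ((MI.fact j : ℂ))⁻¹ * Dmi j φ c * monoC c 1 j z)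
        = fun z => (((MI.fact j : ℂ))⁻¹ * Dmi j φ c) * monoC c 1 j z := rfl
    rw [h1, Dlist_const_mul (contDiff_monoC c j)]
    show ((MI.fact j : ℂ))⁻¹ * Dmi j φ c * Dlist (L.map dirv) (monoC c 1 j) c = _
    rw [Dlist_monoC_center]
    by_cases h : cnt L = j <;> simp [h]
  show (∑ i ∈ MIlt d (p+1),
      Dlist (L.map dirv) (fun z => ((MI.fact i : ℂ))⁻¹ * Dmi i φ c * monoC c 1 i z) c)
    = Dmi (cnt L) φ c
  rw [Finset.sum_congr rfl step, Finset.sum_ite_eq (MIlt d (p+1)) (cnt L)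
    (fun j => ((MI.fact j : ℂ))⁻¹ * Dmi j φ c * (MI.fact j : ℂ))]
  rw [if_pos hmem]
  have hne : (MI.fact (cnt L) : ℂ) ≠ 0 := by
    exact_mod_cast (fact_pos (cnt L)).ne'
  field_simp
lemma pd_zero (v : Pt d) : pd v (fun _ => (0 : ℂ)) = fun _ => (0 : ℂ) := by
  funext z; simp [pd]

lemma Dlist_zero (vs : List (Pt d)) : Dlist vs (fun _ => (0 : ℂ)) = fun _ => (0 : ℂ) := by
  induction vs with
  | nil => rfl
  | cons v vs ih => simp [pd_zero, ih]

lemma Dlist_zero_on {U : Set (Pt d)} (hU : IsOpen U) {f : Pt d → ℂ}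
    (h : ∀ z ∈ U, f z = 0) (vs : List (Pt d)) : ∀ z ∈ U, Dlist vs f z = 0 := by
  intro z hz
  rw [Dlist_congr_on hU (g := fun _ => 0) h vs z hz, Dlist_zero]

lemma pd_neg_on {U : Set (Pt d)} (hU : IsOpen U) {n : ℕ} {f : Pt d → ℂ}
    (hf : ContDiffOn ℝ (n + 1 : ℕ) f U) (v : Pt d) :
    ∀ z ∈ U, pd v (fun z => -f z) z = -pd v f z := by
  intro z hz
  simp only [pd]
  rw [fderiv_fun_neg]
  rfl

lemma Dlist_neg_on {U : Set (Pt d)} (hU : IsOpen U) {f : Pt d → ℂ} (vs : List (Pt d))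
    (hf : ContDiffOn ℝ (vs.length : ℕ) f U) :
    ∀ z ∈ U, Dlist vs (fun z => -f z) z = -Dlist vs f z := by
  induction vs generalizing f with
  | nil => intro z hz; rfl
  | cons v vs ih =>
    intro z hz
    simp only [Dlist_cons]
    rw [Dlist_congr_on hU (pd_neg_on hU hf v) vs z hz]
    exact ih (pd_contDiffOn hU hf v) z hz

lemma Dlist_sub_on {U : Set (Pt d)} (hU : IsOpen U) {f g : Pt d → ℂ} (vs : List (Pt d))
    (hf : ContDiffOn ℝ (vs.length : ℕ) f U) (hg : ContDiffOn ℝ (vs.length : ℕ) g U) :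
    ∀ z ∈ U, Dlist vs (fun z => f z - g z) z = Dlist vs f z - Dlist vs g z := by
  intro z hz
  have h1 : ∀ z ∈ U, (fun z => f z - g z) z = (fun z => f z + -g z) z := by
    intro z _; simp [sub_eq_add_neg]
  rw [Dlist_congr_on hU h1 vs z hz,
    Dlist_add_on hU vs hf (hg.neg) z hz, Dlist_neg_on hU vs hg z hz]
  ring

lemma pd_mul_on {U : Set (Pt d)} (hU : IsOpen U) {n : ℕ} {f g : Pt d → ℂ}
    (hf : ContDiffOn ℝ (n + 1 : ℕ) f U) (hg : ContDiffOn ℝ (n + 1 : ℕ) g U) (v : Pt d) :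
    ∀ z ∈ U, pd v (fun z => g z * f z) z = pd v g z * f z + g z * pd v f z := by
  intro z hz
  simp only [pd]
  rw [fderiv_fun_mul (diffAt_of_contDiffOn hU hg hz) (diffAt_of_contDiffOn hU hf hz)]
  simp only [ContinuousLinearMap.add_apply, ContinuousLinearMap.smul_apply, smul_eq_mul]
  ring

/-- If all derivatives of `f` up to order `n` vanish at `c`, so do those of `g * f`
    up to order `n`. -/
lemma Dlist_mul_vanish {U : Set (Pt d)} (hU : IsOpen U) {c : Pt d} (hc : c ∈ U) :
    ∀ (L : List (Option (Fin d))) (n : ℕ) (f g : Pt d → ℂ),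
      ContDiffOn ℝ (n : ℕ) f U → ContDiffOn ℝ (n : ℕ) g U →
      (∀ M : List (Option (Fin d)), M.length ≤ n → Dlist (M.map dirv) f c = 0) →
      L.length ≤ n → Dlist (L.map dirv) (fun z => g z * f z) c = 0 := by
  intro L
  induction L with
  | nil =>
    intro n f g _ _ hvan _
    have := hvan [] (Nat.zero_le n)
    simp only [List.map_nil, Dlist_nil] at this ⊢
    simp [this]
  | cons a L ih =>
    intro n f g hf hg hvan hlen
    obtain ⟨m, rfl⟩ : ∃ m, n = m + 1 := by
      cases n with
      | zero => simp at hlen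
      | succ m => exact ⟨m, rfl⟩
    simp only [List.length_cons] at hlen
    have hlen' : L.length ≤ m := by omega
    simp only [List.map_cons, Dlist_cons]
    have hmul := pd_mul_on hU hf hg (dirv a)
    rw [Dlist_congr_on hU hmul (L.map dirv) c hc]
    have hfm : ContDiffOn ℝ (m : ℕ) f U := hf.of_le (by exact_mod_cast Nat.le_succ m)
    have hgm : ContDiffOn ℝ (m : ℕ) g U := hg.of_le (by exact_mod_cast Nat.le_succ m)
    have hpf : ContDiffOn ℝ (m : ℕ) (pd (dirv a) f) U := pd_contDiffOn hU hf (dirv a)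
    have hpg : ContDiffOn ℝ (m : ℕ) (pd (dirv a) g) U := pd_contDiffOn hU hg (dirv a)
    have hlenc : ((L.map dirv).length : WithTop ℕ∞) ≤ (m : ℕ) := by
      rw [List.length_map]; exact_mod_cast hlen'
    have t1 : ContDiffOn ℝ ((L.map dirv).length : ℕ) (fun z => pd (dirv a) g z * f z) U :=
      (hpg.mul hfm).of_le hlenc
    have t2 : ContDiffOn ℝ ((L.map dirv).length : ℕ) (fun z => g z * pd (dirv a) f z) U :=
      (hgm.mul hpf).of_le hlenc
    rw [Dlist_add_on hU (L.map dirv) t1 t2 c hc]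
    have e1 : Dlist (L.map dirv) (fun z => pd (dirv a) g z * f z) c = 0 := by
      apply ih m f (pd (dirv a) g) hfm hpg
      · intro M hM; exact hvan M (le_trans hM (Nat.le_succ m))
      · exact hlen'
    have e2 : Dlist (L.map dirv) (fun z => g z * pd (dirv a) f z) c = 0 := by
      apply ih m (pd (dirv a) f) g hpf hgm
      · intro M hM
        have : Dlist (M.map dirv) (pd (dirv a) f) c = Dlist ((a :: M).map dirv) f c := rfl
        rw [this]
        exact hvan (a :: M) (by simpa using Nat.succ_le_succ hM)
      · exact hlen'
    rw [e1, e2, add_zero]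
def incX {d : ℕ} (j : MI d) (ℓ : Fin d) : MI d := (Function.update j.1 ℓ (j.1 ℓ + 1), j.2)

/-- membership in the span of centered-at-0 monomials of degree ≤ p -/
def InSpan (p : ℕ) (q : Pt d → ℂ) : Prop :=
  ∃ C : MI d → ℂ, ∀ z, q z = ∑ j ∈ MIle d p, C j * monoC ((0 : Fin d → ℝ), (0 : ℝ)) 1 j z

lemma inSpan_congr {p : ℕ} {q q' : Pt d → ℂ} (h : ∀ z, q' z = q z) (hq : InSpan p q) :
    InSpan p q' := by
  obtain ⟨C, hC⟩ := hq
  exact ⟨C, fun z => (h z).trans (hC z)⟩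

lemma inSpan_zero {p : ℕ} : InSpan p (fun _ : Pt d => (0 : ℂ)) :=
  ⟨fun _ => 0, fun z => by simp⟩

lemma inSpan_add {p : ℕ} {q r : Pt d → ℂ} (hq : InSpan p q) (hr : InSpan p r) :
    InSpan p (fun z => q z + r z) := by
  obtain ⟨C, hC⟩ := hq; obtain ⟨D, hD⟩ := hr
  refine ⟨fun j => C j + D j, fun z => ?_⟩
  simp only [hC z, hD z, ← Finset.sum_add_distrib]
  apply Finset.sum_congr rfl; intros; ring

lemma inSpan_smul {p : ℕ} {q : Pt d → ℂ} (a : ℂ) (hq : InSpan p q) :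
    InSpan p (fun z => a * q z) := by
  obtain ⟨C, hC⟩ := hq
  refine ⟨fun j => a * C j, fun z => ?_⟩
  simp only [hC z, Finset.mul_sum]
  apply Finset.sum_congr rfl; intros; ring

lemma inSpan_sum {ι : Type*} {p : ℕ} (s : Finset ι) (F : ι → Pt d → ℂ)
    (hF : ∀ i ∈ s, InSpan p (F i)) : InSpan p (fun z => ∑ i ∈ s, F i z) := by
  classical
  induction s using Finset.induction_on with
  | empty => exact inSpan_congr (fun z => by simp) inSpan_zero
  | insert a s hnot ih =>
    have h1 : InSpan p (fun z => F a z + ∑ i ∈ s, F i z) :=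
      inSpan_add (hF a (Finset.mem_insert_self a s))
        (ih (fun i hi => hF i (Finset.mem_insert_of_mem hi)))
    exact inSpan_congr (fun z => by rw [Finset.sum_insert hnot]) h1

lemma inSpan_mono {p p' : ℕ} (h : p ≤ p') {q : Pt d → ℂ} (hq : InSpan p q) : InSpan p' q := by
  obtain ⟨C, hC⟩ := hq
  classical
  refine ⟨fun j => if j ∈ MIle d p then C j else 0, fun z => ?_⟩
  rw [hC z]
  have hsub : MIle d p ⊆ MIle d p' := fun j hj => mem_MIle.mpr (le_trans (mem_MIle.mp hj) h)
  calc ∑ j ∈ MIle d p, C j * monoC ((0 : Fin d → ℝ), (0 : ℝ)) 1 j z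
      = ∑ j ∈ MIle d p, (if j ∈ MIle d p then C j else 0)
          * monoC ((0 : Fin d → ℝ), (0 : ℝ)) 1 j z :=
        Finset.sum_congr rfl (fun j hj => by simp [hj])
    _ = ∑ j ∈ MIle d p', (if j ∈ MIle d p then C j else 0)
          * monoC ((0 : Fin d → ℝ), (0 : ℝ)) 1 j z :=
        Finset.sum_subset hsub (fun x _ hnx => by simp [hnx])

lemma inSpan_monoC0 {p : ℕ} {k : MI d} (hk : MI.deg k ≤ p) :
    InSpan p (monoC ((0 : Fin d → ℝ), (0 : ℝ)) 1 k) := by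
  classical
  refine ⟨fun j => if j = k then 1 else 0, fun z => ?_⟩
  rw [Finset.sum_congr rfl (fun j _ => by rw [ite_mul, one_mul, zero_mul])]
  rw [Finset.sum_ite_eq' (MIle d p) k]
  rw [if_pos (mem_MIle.mpr hk)]

-- monomial factorizations
lemma monoC_factorX {c : Pt d} {j : MI d} {ℓ : Fin d} (h : j.1 ℓ ≠ 0) (z : Pt d) :
    monoC c 1 j z = ((z.1 ℓ - c.1 ℓ : ℝ) : ℂ) * monoC c 1 (decX j ℓ) z := by
  simp only [monoC, div_one, decX]
  have hprod : (∏ m, ((z.1 m - c.1 m : ℝ) : ℂ) ^ (Function.update j.1 ℓ (j.1 ℓ - 1)) m)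
      = ((z.1 ℓ - c.1 ℓ : ℝ) : ℂ) ^ (j.1 ℓ - 1)
        * ∏ m ∈ Finset.univ.erase ℓ, ((z.1 m - c.1 m : ℝ) : ℂ) ^ j.1 m := by
    rw [← Finset.mul_prod_erase Finset.univ _ (Finset.mem_univ ℓ)]
    simp only [Function.update_self]
    congr 1
    exact Finset.prod_congr rfl (fun m hm => by
      rw [Function.update_of_ne (Finset.mem_erase.mp hm).1])
  rw [hprod, ← Finset.mul_prod_erase Finset.univ _ (Finset.mem_univ ℓ)]
  obtain ⟨k, hk⟩ := Nat.exists_eq_succ_of_ne_zero h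
  rw [hk]
  simp only [Nat.succ_sub_one, pow_succ]
  ring

lemma monoC_factorT {c : Pt d} {j : MI d} (h : j.2 ≠ 0) (z : Pt d) :
    monoC c 1 j z = ((z.2 - c.2 : ℝ) : ℂ) * monoC c 1 (decT j) z := by
  simp only [monoC, div_one, decT]
  obtain ⟨k, hk⟩ := Nat.exists_eq_succ_of_ne_zero h
  rw [hk]
  simp only [Nat.succ_sub_one, pow_succ]
  ring

lemma deg_decX {j : MI d} {ℓ : Fin d} (h : j.1 ℓ ≠ 0) :
    MI.deg (decX j ℓ) + 1 = MI.deg j := by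
  simp only [MI.deg, decX]
  rw [Finset.sum_update_of_mem (Finset.mem_univ ℓ), Finset.sdiff_singleton_eq_erase,
    ← Finset.add_sum_erase Finset.univ j.1 (Finset.mem_univ ℓ)]
  have hsub : j.1 ℓ - 1 + 1 = j.1 ℓ := Nat.succ_pred_eq_of_pos (Nat.pos_of_ne_zero h)
  omega

lemma deg_decT {j : MI d} (h : j.2 ≠ 0) : MI.deg (decT j) + 1 = MI.deg j := by
  simp only [MI.deg, decT]; omega

lemma monoC0_incX (j : MI d) (ℓ : Fin d) (z : Pt d) :
    ((z.1 ℓ : ℝ) : ℂ) * monoC ((0 : Fin d → ℝ), (0 : ℝ)) 1 j z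
      = monoC ((0 : Fin d → ℝ), (0 : ℝ)) 1 (incX j ℓ) z := by
  have h : (incX j ℓ).1 ℓ ≠ 0 := by simp [incX]
  rw [monoC_factorX h]
  have : decX (incX j ℓ) ℓ = j := by
    apply Prod.ext
    · funext m
      by_cases hm : m = ℓ
      · subst hm; simp [decX, incX]
      · simp [decX, incX, Function.update_of_ne hm]
    · simp [decX, incX]
  rw [this]
  norm_num

lemma inSpan_mulX {p : ℕ} {q : Pt d → ℂ} (hq : InSpan p q) (ℓ : Fin d) (a : ℝ) :
    InSpan (p + 1) (fun z => ((z.1 ℓ - a : ℝ) : ℂ) * q z) := by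
  obtain ⟨C, hC⟩ := hq
  have key : InSpan (p + 1) (fun z => ∑ j ∈ MIle d p,
      (C j * monoC ((0 : Fin d → ℝ), (0 : ℝ)) 1 (incX j ℓ) z
        + (-(a : ℂ)) * (C j * monoC ((0 : Fin d → ℝ), (0 : ℝ)) 1 j z))) := by
    apply inSpan_sum
    intro j hj
    apply inSpan_add
    · exact inSpan_smul _ (inSpan_monoC0 (by
        have h1 := mem_MIle.mp hj
        have h2 : MI.deg (incX j ℓ) = MI.deg j + 1 := by
          have hne : (incX j ℓ).1 ℓ ≠ 0 := by simp [incX]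
          have := deg_decX hne
          have hdec : decX (incX j ℓ) ℓ = j := by
            apply Prod.ext
            · funext m
              by_cases hm : m = ℓ
              · subst hm; simp [decX, incX]
              · simp [decX, incX, Function.update_of_ne hm]
            · simp [decX, incX]
          rw [hdec] at this
          omega
        omega))
    · exact inSpan_smul _ (inSpan_smul _ (inSpan_monoC0
        (le_trans (mem_MIle.mp hj) (Nat.le_succ p))))
  apply inSpan_congr _ key
  intro z
  rw [hC z, Finset.mul_sum]
  rw [Finset.sum_congr rfl (fun j _ => ?_)]
  push_cast
  rw [← monoC0_incX j ℓ z]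
  ring

lemma inSpan_mulT {p : ℕ} {q : Pt d → ℂ} (hq : InSpan p q) (a : ℝ) :
    InSpan (p + 1) (fun z => ((z.2 - a : ℝ) : ℂ) * q z) := by
  obtain ⟨C, hC⟩ := hq
  have key : InSpan (p + 1) (fun z => ∑ j ∈ MIle d p,
      (C j * monoC ((0 : Fin d → ℝ), (0 : ℝ)) 1 ((j.1, j.2 + 1) : MI d) z
        + (-(a : ℂ)) * (C j * monoC ((0 : Fin d → ℝ), (0 : ℝ)) 1 j z))) := by
    apply inSpan_sum
    intro j hj
    apply inSpan_add
    · apply inSpan_smul _ (inSpan_monoC0 ?_)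
      have h1 := mem_MIle.mp hj
      simp only [MI.deg] at h1 ⊢
      omega
    · exact inSpan_smul _ (inSpan_smul _ (inSpan_monoC0
        (le_trans (mem_MIle.mp hj) (Nat.le_succ p))))
  apply inSpan_congr _ key
  intro z
  rw [hC z, Finset.mul_sum]
  rw [Finset.sum_congr rfl (fun j _ => ?_)]
  have hfac : monoC ((0 : Fin d → ℝ), (0 : ℝ)) 1 ((j.1, j.2 + 1) : MI d) z
      = ((z.2 : ℝ) : ℂ) * monoC ((0 : Fin d → ℝ), (0 : ℝ)) 1 j z := by
    have h : ((j.1, j.2 + 1) : MI d).2 ≠ 0 := by simp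
    rw [monoC_factorT h]
    norm_num [decT]
  rw [hfac]
  push_cast
  ring

/-- Every shifted monomial of degree ≤ its degree lies in the span. -/
lemma inSpan_monoC (c : Pt d) (j : MI d) : InSpan (MI.deg j) (monoC c 1 j) := by
  suffices h : ∀ n (j : MI d), MI.deg j ≤ n → InSpan n (monoC c 1 j) by
    exact h (MI.deg j) j le_rfl
  intro n
  induction n with
  | zero =>
    intro j hj
    have h1 : j.2 = 0 := by have := hj; simp only [MI.deg] at this; omega
    have h2 : ∀ ℓ, j.1 ℓ = 0 := by
      intro ℓ
      have hle : j.1 ℓ ≤ MI.deg j :=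
        le_trans (Finset.single_le_sum (fun m _ => Nat.zero_le (j.1 m)) (Finset.mem_univ ℓ))
          (by simp [MI.deg])
      omega
    have : ∀ z, monoC c 1 j z = monoC ((0 : Fin d → ℝ), (0 : ℝ)) 1 j z := by
      intro z; simp [monoC, h1, h2]
    exact inSpan_congr this (inSpan_monoC0 hj)
  | succ n ih =>
    intro j hj
    by_cases h0 : MI.deg j ≤ n
    · exact inSpan_mono (Nat.le_succ n) (ih j h0)
    have hdeg : MI.deg j = n + 1 := by omega
    by_cases ht : j.2 ≠ 0
    · have hd : MI.deg (decT j) ≤ n := by have := deg_decT ht; omega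
      have := inSpan_mulT (ih (decT j) hd) (c.2)
      exact inSpan_congr (fun z => monoC_factorT ht z) this
    · push_neg at ht
      obtain ⟨ℓ, hℓ⟩ : ∃ ℓ, j.1 ℓ ≠ 0 := by
        by_contra hc
        push_neg at hc
        have : MI.deg j = 0 := by simp [MI.deg, hc, ht]
        omega
      have hd : MI.deg (decX j ℓ) ≤ n := by have := deg_decX hℓ; omega
      have := inSpan_mulX (ih (decX j ℓ) hd) ℓ (c.1 ℓ)
      exact inSpan_congr (fun z => monoC_factorX hℓ z) this

lemma TaylorP_mem_PolySet (p : ℕ) (c : Pt d) (φ : Pt d → ℂ) :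
    TaylorP (p + 1) c φ ∈ PolySet d p := by
  have h : InSpan p (TaylorP (p + 1) c φ) := by
    apply inSpan_sum
    intro j hj
    apply inSpan_smul
    have hdeg : MI.deg j ≤ p := by
      have : j ∈ MIlt d (p+1) := hj
      simp only [MIlt, Finset.mem_filter] at this
      omega
    exact inSpan_mono hdeg (inSpan_monoC c j)
  obtain ⟨C, hC⟩ := h
  exact ⟨C, hC⟩


lemma cdo_mono {U : Set (Pt d)} {m n : ℕ} {f : Pt d → ℂ} (h : m ≤ n)
    (hf : ContDiffOn ℝ (n : ℕ) f U) : ContDiffOn ℝ (m : ℕ) f U :=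
  hf.of_le (by exact_mod_cast h)

lemma pd_const_mul_on {U : Set (Pt d)} (hU : IsOpen U) {n : ℕ} {f : Pt d → ℂ}
    (hf : ContDiffOn ℝ (n + 1 : ℕ) f U) (a : ℂ) (v : Pt d) :
    ∀ z ∈ U, pd v (fun z => a * f z) z = a * pd v f z := by
  intro z hz
  simp only [pd]
  rw [fderiv_const_mul (diffAt_of_contDiffOn hU hf hz) a]
  rfl

lemma Dlist_const_mul_on {U : Set (Pt d)} (hU : IsOpen U) {f : Pt d → ℂ} (vs : List (Pt d))
    (hf : ContDiffOn ℝ (vs.length : ℕ) f U) (a : ℂ) :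
    ∀ z ∈ U, Dlist vs (fun z => a * f z) z = a * Dlist vs f z := by
  induction vs generalizing f with
  | nil => intro z hz; rfl
  | cons v vs ih =>
    intro z hz
    simp only [Dlist_cons]
    rw [Dlist_congr_on hU (pd_const_mul_on hU hf a v) vs z hz]
    exact ih (pd_contDiffOn hU hf v) z hz

lemma pd_sum_on {ι : Type*} {U : Set (Pt d)} (hU : IsOpen U) {n : ℕ} (s : Finset ι)
    (F : ι → Pt d → ℂ) (hF : ∀ i ∈ s, ContDiffOn ℝ (n + 1 : ℕ) (F i) U) (v : Pt d) :
    ∀ z ∈ U, pd v (fun z => ∑ i ∈ s, F i z) z = ∑ i ∈ s, pd v (F i) z := by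
  intro z hz
  simp only [pd]
  rw [fderiv_fun_sum (fun i hi => diffAt_of_contDiffOn hU (hF i hi) hz)]
  simp

lemma Dlist_sum_on {ι : Type*} {U : Set (Pt d)} (hU : IsOpen U) (vs : List (Pt d)) (s : Finset ι)
    (F : ι → Pt d → ℂ) (hF : ∀ i ∈ s, ContDiffOn ℝ (vs.length : ℕ) (F i) U) :
    ∀ z ∈ U, Dlist vs (fun z => ∑ i ∈ s, F i z) z = ∑ i ∈ s, Dlist vs (F i) z := by
  induction vs generalizing F with
  | nil => intro z hz; rfl
  | cons v vs ih =>
    intro z hz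
    simp only [Dlist_cons]
    rw [Dlist_congr_on hU (pd_sum_on hU s F hF v) vs z hz]
    exact ih (fun i => pd v (F i)) (fun i hi => pd_contDiffOn hU (hF i hi) v) z hz


end QT

open QT

/-- If `ψ ∈ C^p(K)` solves `Sψ = 0` on the open set `K ∋ (x_K,t_K)` and
`V ∈ C^{max(p−2,0)}(K;ℝ)`, then the Taylor polynomial of order `p+1` of `ψ` centered at
`(x_K,t_K)` belongs to the quasi-Trefftz space `QT^p(K)`. -/
theorem taylorP_mem_quasiTrefftz
    (d p : ℕ) (hd : 1 ≤ d) (hp : 1 ≤ p)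
    (K : Set (Pt d)) (hK : IsOpen K) (cK : Pt d) (hcK : cK ∈ K)
    (V : Pt d → ℝ) (hV : ContDiffOn ℝ (max (p - 2) 0 : ℕ) V K)
    (ψ : Pt d → ℂ) (hψ : ContDiffOn ℝ (p : ℕ) ψ K)
    (hsol : ∀ z ∈ K, Sop V ψ z = 0) :
    TaylorP (p + 1) cK ψ ∈ QTset d p V cK := by
  classical
  set q : Pt d → ℂ := TaylorP (p + 1) cK ψ with hq_def
  set r : Pt d → ℂ := fun z => q z - ψ z with hr_def
  -- smoothness facts
  have hq_smooth : ∀ n : ℕ, ContDiffOn ℝ (n : ℕ) q K :=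
    fun n => (contDiff_TaylorP (p+1) cK ψ).contDiffOn
  have hr_p : ContDiffOn ℝ (p : ℕ) r K := (hq_smooth p).sub hψ
  -- vanishing of all derivatives of r up to order p at cK
  have hr_van : ∀ L : List (Option (Fin d)), L.length ≤ p → Dlist (L.map dirv) r cK = 0 := by
    intro L hL
    have hlen : ((L.map dirv).length : ℕ) = L.length := by simp
    have hq' : ContDiffOn ℝ ((L.map dirv).length : ℕ) q K := hq_smooth _
    have hψ' : ContDiffOn ℝ ((L.map dirv).length : ℕ) ψ K := by
      apply cdo_mono _ hψ; omega
    have hsplit := Dlist_sub_on hK (L.map dirv) hq' hψ' cK hcK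
    rw [hr_def] at *
    rw [hsplit]
    have h1 : Dlist (L.map dirv) q cK = Dmi (cnt L) ψ cK := by
      rw [hq_def]
      exact Dlist_TaylorP_center p cK ψ L (by rw [deg_cnt]; exact hL)
    have h2 : Dlist (L.map dirv) ψ cK = Dmi (cnt L) ψ cK := by
      rw [Dmi_eq_Dlist]
      have hperm : (L.map dirv).Perm ((canonL (cnt L)).map dirv) :=
        (perm_canonL L).map dirv
      exact Dlist_perm_on hK hperm ψ (by
        apply cdo_mono _ hψ
        simpa using hL) cK hcK
    rw [h1, h2, sub_self]
  -- part 1 : polynomial membership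
  refine ⟨TaylorP_mem_PolySet p cK ψ, ?_⟩
  -- part 2
  intro j hj
  have hp2 : 2 ≤ p := by omega
  have hdeg : MI.deg j ≤ p - 2 := by omega
  -- identity Sop V q = Sop V r on K
  have hqdiff : Differentiable ℝ q :=
    (contDiff_TaylorP (n := (1:ℕ)) (p+1) cK ψ).differentiable (by simp)
  have hψp : ContDiffOn ℝ (((p-1) + 1 : ℕ)) ψ K := by
    rwa [Nat.sub_add_cancel hp]
  have key : ∀ z ∈ K, Sop V q z = Sop V r z := by
    intro z hz
    have hψdz : DifferentiableAt ℝ ψ z := diffAt_of_contDiffOn hK hψp hz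
    have e1 : pd (tDir d) r z = pd (tDir d) q z - pd (tDir d) ψ z := by
      simp only [pd, hr_def]
      rw [fderiv_fun_sub (hqdiff z) hψdz]
      rfl
    have e2 : ∀ ℓ : Fin d, pd (eDir d ℓ) (pd (eDir d ℓ) r) z
        = pd (eDir d ℓ) (pd (eDir d ℓ) q) z - pd (eDir d ℓ) (pd (eDir d ℓ) ψ) z := by
      intro ℓ
      have h1 : ∀ w ∈ K, pd (eDir d ℓ) r w = pd (eDir d ℓ) q w - pd (eDir d ℓ) ψ w := by
        intro w hw
        simp only [pd, hr_def]
        rw [fderiv_fun_sub (hqdiff w) (diffAt_of_contDiffOn hK hψp hw)]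
        rfl
      rw [pd_congr_on hK h1 (eDir d ℓ) z hz]
      have hq1 : DifferentiableAt ℝ (pd (eDir d ℓ) q) z :=
        (diffAt_of_contDiffOn hK (pd_contDiffOn hK (hq_smooth 2) (eDir d ℓ)) hz)
      have hψ2 : ContDiffOn ℝ ((p - 2) + 1 : ℕ) (pd (eDir d ℓ) ψ) K := by
        apply pd_contDiffOn hK (n := p - 2 + 1) _ (eDir d ℓ)
        have : ((p - 2) + 1) + 1 = p := by omega
        rwa [this]
      have hψ1 : DifferentiableAt ℝ (pd (eDir d ℓ) ψ) z :=
        diffAt_of_contDiffOn hK hψ2 hz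
      show fderiv ℝ (fun w => pd (eDir d ℓ) q w - pd (eDir d ℓ) ψ w) z (eDir d ℓ)
        = fderiv ℝ (pd (eDir d ℓ) q) z (eDir d ℓ) - fderiv ℝ (pd (eDir d ℓ) ψ) z (eDir d ℓ)
      rw [fderiv_fun_sub hq1 hψ1]
      simp
    have e3 : q z = r z + ψ z := by simp [hr_def]
    have hz0 := hsol z hz
    simp only [Sop] at hz0 ⊢
    rw [e1, e3, Finset.sum_congr rfl (fun ℓ _ => e2 ℓ)]
    rw [Finset.sum_sub_distrib]
    ring_nf
    ring_nf at hz0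
    linear_combination hz0
  -- replace Sop V q by Sop V r in the derivative
  rw [Dmi_eq_Dlist]
  rw [Dlist_congr_on hK key ((canonL j).map dirv) cK hcK]
  -- now split Sop V r into three pieces
  set vs : List (Pt d) := (canonL j).map dirv with hvs
  have hlen_vs : (vs.length : ℕ) = MI.deg j := by
    rw [hvs, List.length_map, length_canonL]
  -- the three pieces
  have hr_sub1 : ContDiffOn ℝ ((p - 1 : ℕ)) (pd (tDir d) r) K := by
    apply pd_contDiffOn hK (n := p - 1) _ (tDir d)
    have : (p - 1) + 1 = p := by omega
    rwa [this]
  have hA : ContDiffOn ℝ (vs.length : ℕ) (fun z => Complex.I * pd (tDir d) r z) K := by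
    apply ContDiffOn.mul contDiffOn_const
    apply cdo_mono _ hr_sub1
    omega
  have hBi : ∀ ℓ : Fin d, ContDiffOn ℝ ((p - 2 : ℕ)) (pd (eDir d ℓ) (pd (eDir d ℓ) r)) K := by
    intro ℓ
    apply pd_contDiffOn hK (n := p - 2) _ (eDir d ℓ)
    have h1 : ContDiffOn ℝ (((p-2) + 1) + 1 : ℕ) r K := by
      have : ((p - 2) + 1) + 1 = p := by omega
      rw [this]; exact hr_p
    exact pd_contDiffOn hK h1 (eDir d ℓ)
  have hBi' : ∀ ℓ : Fin d, ContDiffOn ℝ (vs.length : ℕ)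
      (pd (eDir d ℓ) (pd (eDir d ℓ) r)) K := by
    intro ℓ; apply cdo_mono _ (hBi ℓ); omega
  have hB : ContDiffOn ℝ (vs.length : ℕ)
      (fun z => ((1:ℂ)/2) * ∑ ℓ : Fin d, pd (eDir d ℓ) (pd (eDir d ℓ) r) z) K := by
    apply ContDiffOn.mul contDiffOn_const
    exact ContDiffOn.sum (fun ℓ _ => hBi' ℓ)
  have hVC : ContDiffOn ℝ ((p - 2 : ℕ)) (fun z => ((V z : ℝ) : ℂ)) K := by
    have := Complex.ofRealCLM.contDiff (n := ((p - 2 : ℕ) : WithTop ℕ∞)) |>.comp_contDiffOn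
      (s := K) (f := V) ?_
    · exact this
    · have hmax : (max (p - 2) 0) = p - 2 := max_eq_left (Nat.zero_le _)
      rwa [hmax] at hV
  have hC : ContDiffOn ℝ (vs.length : ℕ) (fun z => ((V z : ℝ) : ℂ) * r z) K := by
    apply ContDiffOn.mul
    · apply cdo_mono _ hVC; omega
    · apply cdo_mono _ hr_p; omega
  -- expand Sop
  have hSop : Sop V r = fun z => ((fun z => Complex.I * pd (tDir d) r z) z
      + (fun z => ((1:ℂ)/2) * ∑ ℓ : Fin d, pd (eDir d ℓ) (pd (eDir d ℓ) r) z) z)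
      - (fun z => ((V z : ℝ) : ℂ) * r z) z := by
    funext z; simp only [Sop]
  rw [hSop]
  rw [Dlist_sub_on hK vs (hA.add hB) hC cK hcK]
  rw [Dlist_add_on hK vs hA hB cK hcK]
  -- piece A
  have eA : Dlist vs (fun z => Complex.I * pd (tDir d) r z) cK = 0 := by
    rw [Dlist_const_mul_on hK vs (by apply cdo_mono _ hr_sub1; omega) Complex.I cK hcK]
    have : Dlist vs (pd (tDir d) r) cK = Dlist ((none :: canonL j).map dirv) r cK := rfl
    rw [this, hr_van (none :: canonL j) (by rw [List.length_cons, length_canonL]; omega), mul_zero]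
  -- piece B
  have eB : Dlist vs (fun z => ((1:ℂ)/2) * ∑ ℓ : Fin d, pd (eDir d ℓ) (pd (eDir d ℓ) r) z) cK
      = 0 := by
    rw [Dlist_const_mul_on hK vs (ContDiffOn.sum (fun ℓ _ => hBi' ℓ)) ((1:ℂ)/2) cK hcK]
    rw [Dlist_sum_on hK vs Finset.univ _ (fun ℓ _ => hBi' ℓ) cK hcK]
    have : ∀ ℓ : Fin d, Dlist vs (pd (eDir d ℓ) (pd (eDir d ℓ) r)) cK = 0 := by
      intro ℓ
      have h1 : Dlist vs (pd (eDir d ℓ) (pd (eDir d ℓ) r)) cK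
          = Dlist ((some ℓ :: some ℓ :: canonL j).map dirv) r cK := rfl
      rw [h1, hr_van (some ℓ :: some ℓ :: canonL j)
        (by rw [List.length_cons, List.length_cons, length_canonL]; omega)]
    rw [Finset.sum_congr rfl (fun ℓ _ => this ℓ)]
    simp
  -- piece C
  have eC : Dlist vs (fun z => ((V z : ℝ) : ℂ) * r z) cK = 0 := by
    have := Dlist_mul_vanish hK hcK (canonL j) (p - 2) r (fun z => ((V z : ℝ) : ℂ))
      (cdo_mono (by omega) hr_p) hVC
      (fun M hM => hr_van M (by omega)) (by rw [length_canonL]; omega)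
    rw [hvs]
    exact this
  rw [eA, eB, eC]
  ring


end
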